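/- Let K = ℚ(√−11) with ring of integers O_K = ℤ[η], η = (1+√−11)/2, and let L be a rank-2 Hermitian O_K-lattice with Hermitian minimum 2 and discriminant d_L ≤ 1. Then the Gram matrix of a suitable O_K-basis of L is [[2, z],[z̄, 2]] with z ∈ (1/√−11)O_K and N(z) ∈ {3, 36/11}; in particular d_L ∈ {8/11, 1}. -/

import Mathlib

open Matrix Complex
open scoped ComplexOrder

/-- √−11, realized in ℂ. -/
noncomputable def s11 : ℂ := Complex.I * Real.sqrt 11

/-- η = (1+√−11)/2, a root of η² − η + 3 = 0, realized in ℂ. -/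
noncomputable def η11 : ℂ := (1 + s11) / 2

/-- The ring of integers ℤ[η] of ℚ(√−11), as a subset of ℂ. -/
noncomputable def O11 : Set ℂ := {z | ∃ a b : ℤ, z = (a : ℂ) + (b : ℂ) * η11}

/-! ### Auxiliary material -/

noncomputable def r11 : ℝ := Real.sqrt 11

lemma r11_sq : r11 ^ 2 = 11 := Real.sq_sqrt (by norm_num)
lemma r11_pos : 0 < r11 := Real.sqrt_pos.mpr (by norm_num)

lemma s11_sq : s11 ^ 2 = -11 := by
  simp [s11, mul_pow, Complex.I_sq]; norm_cast; exact Real.sq_sqrt (by norm_num)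

lemma η11_sq : η11 ^ 2 = η11 - 3 := by
  unfold η11; linear_combination (1/4 : ℂ) * s11_sq

lemma η11_re : η11.re = 1/2 := by simp [η11, s11]
lemma η11_im : η11.im = r11/2 := by simp [η11, s11, r11]

lemma coordO (a b : ℤ) : ((a:ℂ) + (b:ℂ) * η11).re = a + b/2 ∧
    ((a:ℂ) + (b:ℂ) * η11).im = b * (r11/2) := by
  constructor <;> simp [Complex.add_re, Complex.add_im, Complex.mul_re, Complex.mul_im,
    η11_re, η11_im] <;> ring

lemma O11_intCast (n : ℤ) : (n : ℂ) ∈ O11 := ⟨n, 0, by push_cast; ring⟩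
lemma O11_zero : (0 : ℂ) ∈ O11 := by simpa using O11_intCast 0
lemma O11_one : (1 : ℂ) ∈ O11 := by simpa using O11_intCast 1
lemma O11_add {x y : ℂ} (hx : x ∈ O11) (hy : y ∈ O11) : x + y ∈ O11 := by
  obtain ⟨a, b, rfl⟩ := hx; obtain ⟨c, d, rfl⟩ := hy
  exact ⟨a + c, b + d, by push_cast; ring⟩
lemma O11_neg {x : ℂ} (hx : x ∈ O11) : -x ∈ O11 := by
  obtain ⟨a, b, rfl⟩ := hx; exact ⟨-a, -b, by push_cast; ring⟩
lemma O11_sub {x y : ℂ} (hx : x ∈ O11) (hy : y ∈ O11) : x - y ∈ O11 := by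
  simpa [sub_eq_add_neg] using O11_add hx (O11_neg hy)
lemma O11_mul {x y : ℂ} (hx : x ∈ O11) (hy : y ∈ O11) : x * y ∈ O11 := by
  obtain ⟨a, b, rfl⟩ := hx; obtain ⟨c, d, rfl⟩ := hy
  refine ⟨a * c - 3 * (b * d), a * d + b * c + b * d, ?_⟩
  push_cast
  linear_combination (b : ℂ) * d * η11_sq
lemma conj_eta : (starRingEnd ℂ) η11 = 1 - η11 := by
  have h1 : η11.re = 1/2 := by simp [η11, s11]
  rw [Complex.ext_iff]
  constructor
  · simp [Complex.conj_re, h1]; norm_num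
  · simp [Complex.conj_im]
lemma O11_conj {x : ℂ} (hx : x ∈ O11) : (starRingEnd ℂ) x ∈ O11 := by
  obtain ⟨a, b, rfl⟩ := hx
  refine ⟨a + b, -b, ?_⟩
  rw [map_add, _root_.map_mul, conj_eta, map_intCast, map_intCast]
  push_cast; ring

/-! ### The covering lemma : Euclidean minimum of K is at most 9/11 -/

lemma normSq_cand (t : ℂ) (a b : ℤ) :
    Complex.normSq (t - ((a:ℂ) + (b:ℂ) * η11)) =
      (t.re - a - b/2)^2 + (t.im - b*(r11/2))^2 := by
  rw [Complex.normSq_apply]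
  rw [Complex.sub_re, Complex.sub_im, (coordO a b).1, (coordO a b).2]
  ring

lemma key_ineq (U D : ℝ) (hU : 0 ≤ U) (hU2 : U ≤ 1/2) (hD : 0 ≤ D) (hD2 : D ≤ r11/4) :
    U^2 + D^2 ≤ 9/11 ∨ (1/2 - U)^2 + (r11/2 - D)^2 ≤ 9/11 := by
  by_contra h
  push_neg at h
  obtain ⟨h1, h2⟩ := h
  have hs := r11_sq
  have hs0 := r11_pos
  have ha : 5/2 < r11 * D := by
    nlinarith [sq_nonneg (2*r11*D - 5), sq_nonneg U, mul_nonneg hs0.le hD]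
  have hb : r11 * D < 3 := by
    nlinarith [sq_nonneg (2*r11*(r11/2 - D) - 5),
      mul_nonneg hs0.le (by nlinarith : (0:ℝ) ≤ r11/2 - D), sq_nonneg (1/2 - U)]
  nlinarith [mul_nonneg (by linarith : (0:ℝ) ≤ 2*(r11*D) - 5) (by linarith : (0:ℝ) ≤ 3 - r11*D),
             mul_nonneg hU (by linarith : (0:ℝ) ≤ 1 - 2*U)]

lemma O11_cover (t : ℂ) : ∃ c ∈ O11, Complex.normSq (t - c) ≤ 9/11 := by
  set b0 : ℤ := round (2 * t.im / r11) with hb0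
  set D : ℝ := t.im - b0 * (r11/2) with hDdef
  have hround1 : |2 * t.im / r11 - b0| ≤ 1/2 := by
    rw [hb0]; exact abs_sub_round _
  have hDabs : |D| ≤ r11/4 := by
    have hr0 : r11 ≠ 0 := r11_pos.ne'
    have : D = (2 * t.im / r11 - b0) * (r11/2) := by
      rw [hDdef]; field_simp
    rw [this, abs_mul, abs_of_pos (by linarith [r11_pos] : (0:ℝ) < r11/2)]
    calc |2 * t.im / r11 - b0| * (r11/2) ≤ (1/2) * (r11/2) := by
          apply mul_le_mul_of_nonneg_right hround1 (by linarith [r11_pos])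
      _ = r11/4 := by ring
  set a0 : ℤ := round (t.re - b0/2) with ha0
  set u : ℝ := t.re - b0/2 - a0 with hudef
  have huabs : |u| ≤ 1/2 := by rw [hudef, ha0]; exact abs_sub_round _
  have habs1 : (0:ℝ) ≤ |u| := abs_nonneg u
  have habs2 : (0:ℝ) ≤ |D| := abs_nonneg D
  rcases key_ineq |u| |D| habs1 huabs habs2 hDabs with hcase | hcase
  · refine ⟨(a0:ℂ) + (b0:ℂ) * η11, ⟨a0, b0, rfl⟩, ?_⟩
    rw [normSq_cand]
    have h1 : t.re - a0 - b0/2 = u := by rw [hudef]; ring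
    have h2 : t.im - b0 * (r11/2) = D := by rw [hDdef]
    rw [h1, h2]
    calc u^2 + D^2 = |u|^2 + |D|^2 := by rw [_root_.sq_abs, _root_.sq_abs]
      _ ≤ 9/11 := hcase
  · set εD : ℤ := if 0 ≤ D then 1 else -1 with hεD
    set εu : ℤ := if 0 ≤ u then 1 else -1 with hεu
    set b1 : ℤ := b0 + εD with hb1
    set a1 : ℤ := a0 + (εu - εD) / 2 with ha1
    refine ⟨(a1:ℂ) + (b1:ℂ) * η11, ⟨a1, b1, rfl⟩, ?_⟩
    rw [normSq_cand]
    have hcast : (((εu - εD) / 2 : ℤ) : ℝ) = ((εu:ℝ) - (εD:ℝ)) / 2 := by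
      rw [hεu, hεD]
      by_cases h1 : 0 ≤ u <;> by_cases h2 : 0 ≤ D <;> simp [h1, h2] <;> norm_num
    have hre : t.re - a1 - b1/2 = u - εu/2 := by
      rw [ha1, hb1]
      push_cast [hcast]
      rw [hudef]
      ring
    have him : t.im - b1 * (r11/2) = D - εD * (r11/2) := by
      rw [hb1]; push_cast; rw [hDdef]; ring
    rw [hre, him]
    have e1 : (u - εu/2)^2 = (1/2 - |u|)^2 := by
      rw [hεu]
      rcases le_or_gt 0 u with h | h
      · rw [_root_.abs_of_nonneg h]; simp [h]; ring
      · rw [_root_.abs_of_neg h]; simp [not_le.mpr h]; ring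
    have e2 : (D - εD * (r11/2))^2 = (r11/2 - |D|)^2 := by
      rw [hεD]
      rcases le_or_gt 0 D with h | h
      · rw [_root_.abs_of_nonneg h]; simp [h]; ring
      · rw [_root_.abs_of_neg h]; simp [not_le.mpr h]; ring
    rw [e1, e2]
    exact hcase

/-! ### Norm facts and Bézout -/

lemma normSq_O (a b : ℤ) :
    Complex.normSq ((a:ℂ) + (b:ℂ) * η11) = ((a^2 + a*b + 3*b^2 : ℤ) : ℝ) := by
  rw [Complex.normSq_apply, (coordO a b).1, (coordO a b).2]
  push_cast
  linear_combination ((b:ℝ)^2/4) * r11_sq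

lemma O11_normSq_nat {w : ℂ} (hw : w ∈ O11) : ∃ k : ℕ, Complex.normSq w = k := by
  obtain ⟨a, b, rfl⟩ := hw
  refine ⟨(a^2 + a*b + 3*b^2).toNat, ?_⟩
  rw [normSq_O]
  have h : (0:ℝ) ≤ ((a^2 + a*b + 3*b^2 : ℤ) : ℝ) := by
    rw [← normSq_O]; exact Complex.normSq_nonneg _
  have h2 : (0:ℤ) ≤ a^2 + a*b + 3*b^2 := by exact_mod_cast h
  exact_mod_cast (congrArg (fun z : ℤ => (z:ℝ)) (Int.toNat_of_nonneg h2)).symm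

lemma O11_bezout : ∀ n : ℕ, ∀ α β : ℂ, α ∈ O11 → β ∈ O11 → Complex.normSq β ≤ n →
    ∃ g x y p q : ℂ, g ∈ O11 ∧ x ∈ O11 ∧ y ∈ O11 ∧ p ∈ O11 ∧ q ∈ O11 ∧
      g = x * α + y * β ∧ α = g * p ∧ β = g * q := by
  intro n
  induction n using Nat.strong_induction_on with
  | _ n ih =>
    intro α β hα hβ hn
    by_cases hβ0 : β = 0
    · exact ⟨α, 1, 0, 1, 0, hα, O11_one, O11_zero, O11_one, O11_zero,
        by rw [hβ0]; ring, by ring, by rw [hβ0]; ring⟩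
    · obtain ⟨c, hc, hcov⟩ := O11_cover (α / β)
      have hr : α - c * β ∈ O11 := O11_sub hα (O11_mul hc hβ)
      have hβpos : 0 < Complex.normSq β := Complex.normSq_pos.mpr hβ0
      have hmul : (α/β - c) * β = α - c * β := by field_simp
      have hrval : Complex.normSq (α - c * β) =
          Complex.normSq β * Complex.normSq (α/β - c) := by
        rw [← hmul, Complex.normSq_mul]; ring
      have hrle : Complex.normSq (α - c * β) ≤ 9/11 * Complex.normSq β := by
        rw [hrval]; nlinarith
      obtain ⟨kr, hkr⟩ := O11_normSq_nat hr
      obtain ⟨kβ, hkβ⟩ := O11_normSq_nat hβ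
      have hkrlt : kr < kβ := by
        have : (kr : ℝ) < kβ := by rw [← hkr, ← hkβ]; nlinarith
        exact_mod_cast this
      have hkβn : kβ ≤ n := by
        have : (kβ : ℝ) ≤ n := by rw [← hkβ]; exact hn
        exact_mod_cast this
      obtain ⟨g, x, y, p, q, hg, hx, hy, hp, hq, hgeq, hβeq, hreq⟩ :=
        ih kr (lt_of_lt_of_le hkrlt hkβn) β (α - c * β) hβ hr (le_of_eq hkr)
      refine ⟨g, y, x - y * c, q + c * p, p, hg, hy, O11_sub hx (O11_mul hy hc),
        O11_add hq (O11_mul hc hp), hp, ?_, ?_, ?_⟩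
      · linear_combination hgeq
      · linear_combination hreq + c * hβeq
      · exact hβeq

lemma int_interval (a b e : ℤ) (he : e = a^2 + a*b + 3*b^2) (h1 : 33 ≤ e) (h2 : e ≤ 36) :
    e = 33 ∨ e = 36 := by
  have h4 : 4 * e = (2*a+b)^2 + 11 * b^2 := by rw [he]; ring
  set cc := 2*a+b with hcc
  have hb2 : b^2 ≤ 13 := by nlinarith
  have hb : -4 ≤ b ∧ b ≤ 4 := by constructor <;> nlinarith [sq_nonneg (b+4), sq_nonneg (b-4)]
  have hc2 : cc^2 ≤ 144 := by nlinarith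
  have hc : -12 ≤ cc ∧ cc ≤ 12 := by
    constructor <;> nlinarith [sq_nonneg (cc+12), sq_nonneg (cc-12)]
  clear_value cc
  clear hcc he hb2 hc2
  obtain ⟨hb1, hb3⟩ := hb
  obtain ⟨hc1, hc3⟩ := hc
  interval_cases b <;> interval_cases cc <;> omega

lemma int_unit (a b : ℤ) (he : a^2 + a*b + 3*b^2 = 1) :
    (a = 1 ∧ b = 0) ∨ (a = -1 ∧ b = 0) := by
  have h4 : (2*a+b)^2 + 11 * b^2 = 4 := by linarith [sq_nonneg b, he, sq_nonneg (2*a+b)]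
  have hb : b = 0 := by nlinarith [sq_nonneg (2*a+b)]
  subst hb
  have ha : a * a = 1 := by nlinarith
  rcases mul_self_eq_one_iff.mp ha with h | h
  · exact Or.inl ⟨h, rfl⟩
  · exact Or.inr ⟨h, rfl⟩

/-! ### The inverse different -/

def Dif : Set ℂ := {z | ∃ w ∈ O11, z = w / s11}

lemma s11_ne : s11 ≠ 0 := by
  simp only [s11, mul_ne_zero_iff]
  exact ⟨Complex.I_ne_zero,
    Complex.ofReal_ne_zero.mpr (Real.sqrt_pos.mpr (by norm_num : (0:ℝ) < 11)).ne'⟩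
lemma s11_mem : s11 ∈ O11 := ⟨-1, 2, by push_cast [η11]; ring⟩
lemma normSq_s11 : Complex.normSq s11 = 11 := by
  simp [s11, Complex.normSq_apply]

lemma Dif_add {x y : ℂ} (hx : x ∈ Dif) (hy : y ∈ Dif) : x + y ∈ Dif := by
  obtain ⟨w, hw, rfl⟩ := hx; obtain ⟨v, hv, rfl⟩ := hy
  exact ⟨w + v, O11_add hw hv, by field_simp⟩
lemma Dif_smul {o x : ℂ} (ho : o ∈ O11) (hx : x ∈ Dif) : o * x ∈ Dif := by
  obtain ⟨w, hw, rfl⟩ := hx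
  exact ⟨o * w, O11_mul ho hw, by field_simp⟩
lemma Dif_mul3 {o1 x o2 : ℂ} (ho1 : o1 ∈ O11) (hx : x ∈ Dif) (ho2 : o2 ∈ O11) :
    o1 * x * o2 ∈ Dif := by
  rw [show o1 * x * o2 = (o1 * o2) * x by ring]
  exact Dif_smul (O11_mul ho1 ho2) hx
lemma Dif_conj {x : ℂ} (hx : x ∈ Dif) : (starRingEnd ℂ) x ∈ Dif := by
  obtain ⟨w, hw, rfl⟩ := hx
  refine ⟨-(starRingEnd ℂ) w, O11_neg (O11_conj hw), ?_⟩
  rw [map_div₀]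
  have hcs : (starRingEnd ℂ) s11 = -s11 := by
    simp [s11, _root_.map_mul, Complex.conj_I, Complex.conj_ofReal]
  rw [hcs]
  rw [div_neg, neg_div]
lemma Dif_normSq {z : ℂ} (hz : z ∈ Dif) :
    ∃ a b : ℤ, Complex.normSq z = ((a^2+a*b+3*b^2 : ℤ) : ℝ)/11 := by
  obtain ⟨w, hw, rfl⟩ := hz
  obtain ⟨a, b, rfl⟩ := hw
  refine ⟨a, b, ?_⟩
  rw [map_div₀, normSq_s11]
  congr 1
  exact normSq_O a b

lemma Dif_real_int {z : ℂ} (hz : z ∈ Dif) (him : z.im = 0) : ∃ n : ℤ, z = (n : ℂ) := by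
  obtain ⟨w, hw, rfl⟩ := hz
  obtain ⟨a, b, rfl⟩ := hw
  set w : ℂ := (a:ℂ) + (b:ℂ) * η11 with hwdef
  have him2 : (w / s11).im = -w.re * r11 / 11 := by
    rw [Complex.div_im, normSq_s11]
    simp [s11, r11]
    ring
  have hre2 : (w / s11).re = w.im * r11 / 11 := by
    rw [Complex.div_re, normSq_s11]
    simp [s11, r11]
  rw [him2] at him
  have hwre : w.re = 0 := by
    have := r11_pos
    rcases mul_eq_zero.mp (by linarith [him] : -w.re * r11 = 0) with h | h
    · linarith
    · linarith
  rw [(coordO a b).1] at hwre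
  have hb : (b:ℝ) = -2*a := by linarith
  have hbz : b = -2*a := by exact_mod_cast hb
  refine ⟨-a, ?_⟩
  rw [Complex.ext_iff]
  constructor
  · rw [hre2, (coordO a b).2, hbz, Complex.intCast_re]
    push_cast
    linear_combination (-(a:ℝ)/11) * r11_sq
  · rw [him2, Complex.intCast_im]
    exact him

/-! ### Matrix helpers -/

lemma quad_expand (G : Matrix (Fin 2) (Fin 2) ℂ) (v : Fin 2 → ℂ) :
    star v ⬝ᵥ G.mulVec v =
      (starRingEnd ℂ) (v 0) * G 0 0 * v 0 + (starRingEnd ℂ) (v 0) * G 0 1 * v 1 +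
      (starRingEnd ℂ) (v 1) * G 1 0 * v 0 + (starRingEnd ℂ) (v 1) * G 1 1 * v 1 := by
  simp [dotProduct, Matrix.mulVec, Fin.sum_univ_two, Pi.star_apply, Complex.star_def]
  ring

lemma entry_UGU (G U : Matrix (Fin 2) (Fin 2) ℂ) (i j : Fin 2) :
    (Uᴴ * G * U) i j =
      (starRingEnd ℂ) (U 0 i) * G 0 0 * U 0 j + (starRingEnd ℂ) (U 0 i) * G 0 1 * U 1 j +
      (starRingEnd ℂ) (U 1 i) * G 1 0 * U 0 j + (starRingEnd ℂ) (U 1 i) * G 1 1 * U 1 j := by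
  simp [Matrix.mul_apply, Fin.sum_univ_two, Matrix.conjTranspose_apply, Complex.star_def]
  ring

lemma entry_eq_quad (G U : Matrix (Fin 2) (Fin 2) ℂ) (i : Fin 2) :
    (Uᴴ * G * U) i i = star (fun k => U k i) ⬝ᵥ G.mulVec (fun k => U k i) := by
  rw [quad_expand G (fun k => U k i), entry_UGU]

lemma UGU_Dif {G U : Matrix (Fin 2) (Fin 2) ℂ} (hGv : ∀ i j, G i j ∈ Dif)
    (hU : ∀ i j, U i j ∈ O11) (i j : Fin 2) : (Uᴴ * G * U) i j ∈ Dif := by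
  rw [entry_UGU]
  exact Dif_add (Dif_add (Dif_add
    (Dif_mul3 (O11_conj (hU 0 i)) (hGv 0 0) (hU 0 j))
    (Dif_mul3 (O11_conj (hU 0 i)) (hGv 0 1) (hU 1 j)))
    (Dif_mul3 (O11_conj (hU 1 i)) (hGv 1 0) (hU 0 j)))
    (Dif_mul3 (O11_conj (hU 1 i)) (hGv 1 1) (hU 1 j))

lemma matmul_O11 {A B : Matrix (Fin 2) (Fin 2) ℂ} (hA : ∀ i j, A i j ∈ O11)
    (hB : ∀ i j, B i j ∈ O11) (i j : Fin 2) : (A * B) i j ∈ O11 := by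
  rw [Matrix.mul_apply, Fin.sum_univ_two]
  exact O11_add (O11_mul (hA i 0) (hB 0 j)) (O11_mul (hA i 1) (hB 1 j))

/-! ### Main theorem -/

set_option maxHeartbeats 2000000 in
theorem stmt11 (G : Matrix (Fin 2) (Fin 2) ℂ)
    (hGval : ∀ i j, ∃ w ∈ O11, G i j = w / s11)
    (hG : G.PosDef)
    (hmin : IsLeast {x : ℝ | ∃ v : Fin 2 → ℂ, (∀ i, v i ∈ O11) ∧ v ≠ 0 ∧
      (star v ⬝ᵥ G.mulVec v).re = x} 2)
    (hdet : (G.det).re ≤ 1) :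
    (∃ U : Matrix (Fin 2) (Fin 2) ℂ,
      (∀ i j, U i j ∈ O11) ∧
      (∃ V : Matrix (Fin 2) (Fin 2) ℂ, (∀ i j, V i j ∈ O11) ∧ U * V = 1) ∧
      ∃ z : ℂ, (∃ w ∈ O11, z = w / s11) ∧
        Uᴴ * G * U = !![2, z; (starRingEnd ℂ) z, 2] ∧
        (Complex.normSq z = 3 ∨ Complex.normSq z = 36 / 11)) ∧
    ((G.det).re = 8 / 11 ∨ (G.det).re = 1) := by
  obtain ⟨⟨v₀, hv₀mem, hv₀ne, hv₀Q⟩, hminlb⟩ := hmin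
  have hlow : ∀ v : Fin 2 → ℂ, (∀ i, v i ∈ O11) → v ≠ 0 →
      2 ≤ (star v ⬝ᵥ G.mulVec v).re := fun v hv hne => hminlb ⟨v, hv, hne, rfl⟩
  have hGDif : ∀ i j, G i j ∈ Dif := fun i j => hGval i j
  have hGH : Gᴴ = G := hG.1
  -- Bezout applied to the minimal vector
  obtain ⟨kβ, hkβ⟩ := O11_normSq_nat (hv₀mem 1)
  obtain ⟨g, x, y, p, q, hg, hx, hy, hp, hq, hgeq, hαeq, hβeq⟩ :=
    O11_bezout kβ (v₀ 0) (v₀ 1) (hv₀mem 0) (hv₀mem 1) (le_of_eq hkβ)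
  set v' : Fin 2 → ℂ := ![p, q] with hv'
  have hv'0 : v' 0 = p := rfl
  have hv'1 : v' 1 = q := rfl
  have hv'mem : ∀ i, v' i ∈ O11 := by
    intro i; fin_cases i
    · exact hp
    · exact hq
  have hv₀eq : v₀ = fun i => g * v' i := by
    funext i; fin_cases i
    · simpa [hv'0] using hαeq
    · simpa [hv'1] using hβeq
  have hv'ne : v' ≠ 0 := by
    intro h
    apply hv₀ne
    rw [hv₀eq]
    funext i
    rw [congrFun h i]
    simp
  have hgg : (starRingEnd ℂ) g * g = ((Complex.normSq g : ℝ) : ℂ) := by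
    rw [mul_comm, Complex.mul_conj]
  have hsc : star v₀ ⬝ᵥ G.mulVec v₀ =
      ((Complex.normSq g : ℝ) : ℂ) * (star v' ⬝ᵥ G.mulVec v') := by
    rw [hv₀eq, quad_expand, quad_expand]
    simp only [_root_.map_mul]
    linear_combination ((starRingEnd ℂ) (v' 0) * G 0 0 * v' 0 +
      (starRingEnd ℂ) (v' 0) * G 0 1 * v' 1 +
      (starRingEnd ℂ) (v' 1) * G 1 0 * v' 0 +
      (starRingEnd ℂ) (v' 1) * G 1 1 * v' 1) * hgg
  have hQv' : 2 ≤ (star v' ⬝ᵥ G.mulVec v').re := hlow v' hv'mem hv'ne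
  have hreQ : (2:ℝ) = Complex.normSq g * (star v' ⬝ᵥ G.mulVec v').re := by
    rw [← hv₀Q, hsc]
    simp [Complex.mul_re]
  -- g is a unit
  obtain ⟨ag, bg, hgab⟩ := hg
  have hng : Complex.normSq g = ((ag^2 + ag*bg + 3*bg^2 : ℤ) : ℝ) := by
    rw [hgab, normSq_O]
  have he0 : (0:ℝ) ≤ ((ag^2+ag*bg+3*bg^2 : ℤ):ℝ) := hng ▸ Complex.normSq_nonneg g
  have heZ : (0:ℤ) ≤ ag^2+ag*bg+3*bg^2 := by exact_mod_cast he0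
  have hene : ag^2+ag*bg+3*bg^2 ≠ 0 := by
    intro h
    rw [hng, h] at hreQ
    norm_num at hreQ
  have hele : ((ag^2+ag*bg+3*bg^2:ℤ):ℝ) ≤ 1 := by
    by_contra hgt
    push_neg at hgt
    have h2 : (2:ℤ) ≤ ag^2+ag*bg+3*bg^2 := by
      have : (1:ℤ) < ag^2+ag*bg+3*bg^2 := by exact_mod_cast hgt
      omega
    have h2r : (2:ℝ) ≤ ((ag^2+ag*bg+3*bg^2:ℤ):ℝ) := by exact_mod_cast h2
    rw [hng] at hreQ
    nlinarith
  have heq1 : ag^2+ag*bg+3*bg^2 = 1 := by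
    have h1 : ag^2+ag*bg+3*bg^2 ≤ 1 := by exact_mod_cast hele
    omega
  have hg2 : g * g = 1 := by
    rcases int_unit ag bg heq1 with ⟨h1, h2⟩ | ⟨h1, h2⟩ <;>
      rw [hgab, h1, h2] <;> push_cast <;> ring
  set X := g * x with hX
  set Y := g * y with hY
  have hXO : X ∈ O11 := O11_mul ⟨ag, bg, hgab⟩ hx
  have hYO : Y ∈ O11 := O11_mul ⟨ag, bg, hgab⟩ hy
  have hXY : X * v₀ 0 + Y * v₀ 1 = 1 := by
    rw [hX, hY]; linear_combination (-g) * hgeq + hg2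
  -- first base change
  set U₁ : Matrix (Fin 2) (Fin 2) ℂ := !![v₀ 0, -Y; v₀ 1, X] with hU₁
  set V₁ : Matrix (Fin 2) (Fin 2) ℂ := !![X, Y; -(v₀ 1), v₀ 0] with hV₁
  have hU₁O : ∀ i j, U₁ i j ∈ O11 := by
    intro i j
    fin_cases i <;> fin_cases j <;>
      simp only [hU₁, Matrix.cons_val', Matrix.cons_val_zero, Matrix.cons_val_one,
        Matrix.head_cons, Matrix.empty_val', Matrix.cons_val_fin_one, Matrix.head_fin_const,
        Matrix.of_apply]
    · exact hv₀mem 0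
    · exact O11_neg hYO
    · exact hv₀mem 1
    · exact hXO
  have hV₁O : ∀ i j, V₁ i j ∈ O11 := by
    intro i j
    fin_cases i <;> fin_cases j <;>
      simp only [hV₁, Matrix.cons_val', Matrix.cons_val_zero, Matrix.cons_val_one,
        Matrix.head_cons, Matrix.empty_val', Matrix.cons_val_fin_one, Matrix.head_fin_const,
        Matrix.of_apply]
    · exact hXO
    · exact hYO
    · exact O11_neg (hv₀mem 1)
    · exact hv₀mem 0
  have hU₁V₁ : U₁ * V₁ = 1 := by
    ext i j
    fin_cases i <;> fin_cases j <;>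
      simp [hU₁, hV₁, Matrix.mul_apply, Fin.sum_univ_two, Matrix.one_apply] <;>
      first
        | linear_combination hXY
        | ring
  set G₁ := U₁ᴴ * G * U₁ with hG₁
  have hG₁Dif : ∀ i j, G₁ i j ∈ Dif := fun i j => UGU_Dif hGDif hU₁O i j
  have hG₁H : G₁ᴴ = G₁ := by
    rw [hG₁]
    simp [Matrix.conjTranspose_mul, Matrix.mul_assoc, hGH]
  have hcol0 : (fun k => U₁ k 0) = v₀ := by
    funext k
    fin_cases k <;> simp [hU₁]
  have hG₁00re : (G₁ 0 0).re = 2 := by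
    rw [hG₁, entry_eq_quad, hcol0]
    exact hv₀Q
  have hherm00 : (starRingEnd ℂ) (G₁ 0 0) = G₁ 0 0 := by
    have h := congrFun (congrFun hG₁H 0) 0
    simpa [Matrix.conjTranspose_apply] using h
  have hG₁00 : G₁ 0 0 = 2 := by
    obtain ⟨n, hn⟩ := Dif_real_int (hG₁Dif 0 0) (Complex.conj_eq_iff_im.mp hherm00)
    have h2 : (n:ℝ) = 2 := by
      rw [hn] at hG₁00re
      simpa using hG₁00re
    have h3 : n = 2 := by exact_mod_cast h2
    rw [hn, h3]; norm_num
  set z₁ := G₁ 0 1 with hz₁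
  have hG₁10 : G₁ 1 0 = (starRingEnd ℂ) z₁ := by
    have h := congrFun (congrFun hG₁H 1) 0
    simpa [Matrix.conjTranspose_apply] using h.symm
  have hherm11 : (starRingEnd ℂ) (G₁ 1 1) = G₁ 1 1 := by
    have h := congrFun (congrFun hG₁H 1) 1
    simpa [Matrix.conjTranspose_apply] using h
  obtain ⟨n₁, hn₁⟩ := Dif_real_int (hG₁Dif 1 1) (Complex.conj_eq_iff_im.mp hherm11)
  have hdetU₁ : U₁.det = 1 := by
    rw [hU₁, Matrix.det_fin_two_of]
    linear_combination hXY
  have hdetG₁ : G₁.det = G.det := by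
    rw [hG₁, Matrix.det_mul, Matrix.det_mul, Matrix.det_conjTranspose, hdetU₁]
    simp
  have hdre : (G.det).re = 2 * (n₁:ℝ) - Complex.normSq z₁ := by
    rw [← hdetG₁, Matrix.det_fin_two, hG₁00, hn₁, hG₁10, ← hz₁, Complex.mul_conj]
    simp
  -- second reduction
  obtain ⟨c, hc, hcov⟩ := O11_cover (z₁ / 2)
  have hcov' : Complex.normSq (z₁ - 2*c) ≤ 36/11 := by
    have h1 : z₁ / 2 - c = (z₁ - 2*c)/2 := by ring
    rw [h1, map_div₀] at hcov
    have h2 : Complex.normSq 2 = 4 := by norm_num [Complex.normSq_apply]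
    rw [h2] at hcov
    linarith
  set U₂ : Matrix (Fin 2) (Fin 2) ℂ := !![1, -c; 0, 1] with hU₂
  set V₂ : Matrix (Fin 2) (Fin 2) ℂ := !![1, c; 0, 1] with hV₂
  have hU₂O : ∀ i j, U₂ i j ∈ O11 := by
    intro i j
    fin_cases i <;> fin_cases j <;>
      simp only [hU₂, Matrix.cons_val', Matrix.cons_val_zero, Matrix.cons_val_one,
        Matrix.head_cons, Matrix.empty_val', Matrix.cons_val_fin_one, Matrix.head_fin_const,
        Matrix.of_apply]
    · exact O11_one
    · exact O11_neg hc
    · exact O11_zero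
    · exact O11_one
  have hV₂O : ∀ i j, V₂ i j ∈ O11 := by
    intro i j
    fin_cases i <;> fin_cases j <;>
      simp only [hV₂, Matrix.cons_val', Matrix.cons_val_zero, Matrix.cons_val_one,
        Matrix.head_cons, Matrix.empty_val', Matrix.cons_val_fin_one, Matrix.head_fin_const,
        Matrix.of_apply]
    · exact O11_one
    · exact hc
    · exact O11_zero
    · exact O11_one
  have hU₂V₂ : U₂ * V₂ = 1 := by
    ext i j
    fin_cases i <;> fin_cases j <;>
      simp [hU₂, hV₂, Matrix.mul_apply, Fin.sum_univ_two, Matrix.one_apply]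
  have hdetU₂ : U₂.det = 1 := by
    rw [hU₂, Matrix.det_fin_two_of]
    ring
  set U := U₁ * U₂ with hUdef
  set V := V₂ * V₁ with hVdef
  have hUV : U * V = 1 := by
    rw [hUdef, hVdef, Matrix.mul_assoc, ← Matrix.mul_assoc U₂, hU₂V₂, Matrix.one_mul, hU₁V₁]
  have hUO : ∀ i j, U i j ∈ O11 := fun i j => by
    rw [hUdef]; exact matmul_O11 hU₁O hU₂O i j
  have hVO : ∀ i j, V i j ∈ O11 := fun i j => by
    rw [hVdef]; exact matmul_O11 hV₂O hV₁O i j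
  set G₂ := Uᴴ * G * U with hG₂
  have hG₂alt : G₂ = U₂ᴴ * G₁ * U₂ := by
    rw [hG₂, hUdef, hG₁, Matrix.conjTranspose_mul]
    simp [Matrix.mul_assoc]
  have hG₂Dif : ∀ i j, G₂ i j ∈ Dif := fun i j => by
    rw [hG₂]; exact UGU_Dif hGDif hUO i j
  have hG₂H : G₂ᴴ = G₂ := by
    rw [hG₂]
    simp [Matrix.conjTranspose_mul, Matrix.mul_assoc, hGH]
  have hU₂00 : U₂ 0 0 = 1 := rfl
  have hU₂01 : U₂ 0 1 = -c := rfl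
  have hU₂10 : U₂ 1 0 = 0 := rfl
  have hU₂11 : U₂ 1 1 = 1 := rfl
  have hG₂00 : G₂ 0 0 = 2 := by
    rw [hG₂alt, entry_UGU, hU₂00, hU₂10, hG₁00]
    simp
  have hG₂11expr : G₂ 1 1 = (starRingEnd ℂ) c * c * 2 - (starRingEnd ℂ) c * z₁
      - c * (starRingEnd ℂ) z₁ + (n₁:ℂ) := by
    rw [hG₂alt, entry_UGU, hU₂01, hU₂11, hG₁00, hG₁10, hn₁, ← hz₁]
    simp only [map_neg, _root_.map_one]
    ring
  have hre11 : (G₂ 1 1).re = 2 * (Complex.normSq (z₁ - 2*c)/4) +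
      ((n₁:ℝ) - Complex.normSq z₁/2) := by
    rw [hG₂11expr]
    simp only [Complex.add_re, Complex.sub_re, Complex.mul_re, Complex.mul_im,
      Complex.conj_re, Complex.conj_im, Complex.intCast_re, Complex.normSq_apply,
      Complex.sub_im, Complex.re_ofNat, Complex.im_ofNat]
    ring
  obtain ⟨m₂, hm₂⟩ := Dif_real_int (hG₂Dif 1 1) (Complex.conj_eq_iff_im.mp (by
    have h := congrFun (congrFun hG₂H 1) 1
    simpa [Matrix.conjTranspose_apply] using h))
  have hVU : V * U = 1 := mul_eq_one_comm.mp hUV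
  have hwne : (fun k => U k 1) ≠ (0 : Fin 2 → ℂ) := by
    intro h0
    have h1 := congrFun h0 0
    have h2 := congrFun h0 1
    simp only [Pi.zero_apply] at h1 h2
    have h3 := congrFun (congrFun hVU 1) 1
    rw [Matrix.mul_apply, Fin.sum_univ_two, h1, h2] at h3
    simp [Matrix.one_apply] at h3
  have hlow2 : 2 ≤ (G₂ 1 1).re := by
    rw [hG₂, entry_eq_quad]
    exact hlow _ (fun i => hUO i 1) hwne
  have hup : (G₂ 1 1).re ≤ 18/11 + (G.det).re/2 := by
    rw [hre11, hdre]
    linarith [hcov']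
  have hd811 : (8:ℝ)/11 ≤ (G.det).re := by linarith
  have hm₂2 : m₂ = 2 := by
    have hr : ((m₂:ℝ)) = (G₂ 1 1).re := by rw [hm₂]; simp
    have hup3 : (m₂:ℝ) < 3 := by rw [hr]; linarith
    have hlo : (2:ℝ) ≤ (m₂:ℝ) := by rw [hr]; exact hlow2
    have h1 : (2:ℤ) ≤ m₂ := by exact_mod_cast hlo
    have h2 : m₂ < (3:ℤ) := by exact_mod_cast hup3
    omega
  have hG₂11 : G₂ 1 1 = 2 := by rw [hm₂, hm₂2]; norm_num
  set z₂ := G₂ 0 1 with hz₂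
  have hG₂10 : G₂ 1 0 = (starRingEnd ℂ) z₂ := by
    have h := congrFun (congrFun hG₂H 1) 0
    simpa [Matrix.conjTranspose_apply] using h.symm
  have hmat : G₂ = !![(2:ℂ), z₂; (starRingEnd ℂ) z₂, 2] := by
    ext i j
    fin_cases i <;> fin_cases j <;>
      simp only [Matrix.cons_val', Matrix.cons_val_zero, Matrix.cons_val_one,
        Matrix.head_cons, Matrix.empty_val', Matrix.cons_val_fin_one, Matrix.head_fin_const,
        Matrix.of_apply]
    · exact hG₂00
    · exact hz₂.symm
    · exact hG₂10
    · exact hG₂11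
  have hdetU : U.det = 1 := by
    rw [hUdef, Matrix.det_mul, hdetU₁, hdetU₂]; norm_num
  have hdetG₂ : G₂.det = G.det := by
    rw [hG₂, Matrix.det_mul, Matrix.det_mul, Matrix.det_conjTranspose, hdetU]; simp
  have hdet4 : (G.det).re = 4 - Complex.normSq z₂ := by
    rw [← hdetG₂, Matrix.det_fin_two, hG₂00, hG₂11, hG₂10, ← hz₂, Complex.mul_conj]
    simp
    norm_num
  obtain ⟨a2, b2, hab2⟩ := Dif_normSq (hG₂Dif 0 1)
  rw [← hz₂] at hab2
  have hN33 : (33:ℤ) ≤ a2^2+a2*b2+3*b2^2 := by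
    have h : (33:ℝ) ≤ ((a2^2+a2*b2+3*b2^2 : ℤ):ℝ) := by
      rw [hab2] at hdet4
      nlinarith
    exact_mod_cast h
  have hN36 : a2^2+a2*b2+3*b2^2 ≤ (36:ℤ) := by
    have h : ((a2^2+a2*b2+3*b2^2 : ℤ):ℝ) ≤ 36 := by
      rw [hab2] at hdet4
      nlinarith
    exact_mod_cast h
  rcases int_interval a2 b2 _ rfl hN33 hN36 with hN | hN
  · refine ⟨⟨U, hUO, ⟨V, hVO, hUV⟩, z₂, hG₂Dif 0 1, ?_, ?_⟩, ?_⟩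
    · rw [← hG₂]; exact hmat
    · left
      rw [hab2, hN]; norm_num
    · right
      rw [hdet4, hab2, hN]; norm_num
  · refine ⟨⟨U, hUO, ⟨V, hVO, hUV⟩, z₂, hG₂Dif 0 1, ?_, ?_⟩, ?_⟩
    · rw [← hG₂]; exact hmat
    · right
      rw [hab2, hN]; norm_num
    · left
      rw [hdet4, hab2, hN]; norm_num
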